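/- arXiv:1910.05854 — 2 statements merged into one kernel-verified Lean document; each statement's English description precedes it below -/
import Mathlib

section
/- For every t > 0, the variance function of the inverse mixed stable subordinator satisfies the exact identity Var_Y(t) = (2 t^{2α₁}/C₁²) E²_{α₁−α₂, 2α₁+1}(−C₂ t^{α₁−α₂}/C₁) − U(t)²; equivalently, ∫₀^t 2 U(t−τ) u(τ) dτ = (2 t^{2α₁}/C₁²) E²_{α₁−α₂, 2α₁+1}(−C₂ t^{α₁−α₂}/C₁). -/
open Real MeasureTheory Filter Topology

/-- Two-parameter Mittag-Leffler function `E_{a,b}(x)`. -/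
noncomputable def ML (a b x : ℝ) : ℝ :=
  ∑' k : ℕ, x ^ k / Real.Gamma ((k : ℝ) * a + b)

/-- Second-order (three-parameter, `γ = 2`) Mittag-Leffler function `E²_{a,b}(x)`. -/
noncomputable def ML2 (a b x : ℝ) : ℝ :=
  ∑' k : ℕ, ((k : ℝ) + 1) * x ^ k / Real.Gamma ((k : ℝ) * a + b)

/-- Renewal function `U(t)` of the inverse mixed stable subordinator. -/
noncomputable def Ufun (a1 a2 C1 C2 t : ℝ) : ℝ :=
  t ^ a1 / C1 * ML (a1 - a2) (a1 + 1) (-C2 * t ^ (a1 - a2) / C1)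

/-- Renewal density `u(t)` of the inverse mixed stable subordinator. -/
noncomputable def ufun (a1 a2 C1 C2 t : ℝ) : ℝ :=
  t ^ (a1 - 1) / C1 * ML (a1 - a2) a1 (-C2 * t ^ (a1 - a2) / C1)

/-- Covariance function of the inverse mixed stable subordinator. -/
noncomputable def CovY (a1 a2 C1 C2 s t : ℝ) : ℝ :=
  (∫ τ in (0:ℝ)..(min s t),
      (Ufun a1 a2 C1 C2 (s - τ) + Ufun a1 a2 C1 C2 (t - τ)) * ufun a1 a2 C1 C2 τ)
    - Ufun a1 a2 C1 C2 s * Ufun a1 a2 C1 C2 t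

/-- Variance function of the inverse mixed stable subordinator. -/
noncomputable def VarY (a1 a2 C1 C2 t : ℝ) : ℝ := CovY a1 a2 C1 C2 t t

/-- The integral `I(s,t) = ∫₀^s U(t-τ) u(τ) dτ`. -/
noncomputable def Ifun (a1 a2 C1 C2 s t : ℝ) : ℝ :=
  ∫ τ in (0:ℝ)..s, Ufun a1 a2 C1 C2 (t - τ) * ufun a1 a2 C1 C2 τ

/-- The constant `K(s)`. -/
noncomputable def Kfun (a1 a2 C1 C2 s : ℝ) : ℝ :=
  s ^ (a1 + 1) / (C1 * C2 * Real.Gamma a2) *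
    ∑' k : ℕ, ((k : ℝ) * (a1 - a2) + a1) * (-C2 * s ^ (a1 - a2) / C1) ^ k /
      Real.Gamma ((k : ℝ) * (a1 - a2) + a1 + 2)

/-- Covariance function of the mixed fractional Poisson process. -/
noncomputable def CovN (a1 a2 C1 C2 lam s t : ℝ) : ℝ :=
  lam * Ufun a1 a2 C1 C2 (min s t) + lam ^ 2 * CovY a1 a2 C1 C2 s t

/-- Variance function of the mixed fractional Poisson process. -/
noncomputable def VarN (a1 a2 C1 C2 lam t : ℝ) : ℝ :=
  lam * Ufun a1 a2 C1 C2 t + lam ^ 2 * VarY a1 a2 C1 C2 t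

/-- Correlation function of the inverse mixed stable subordinator. -/
noncomputable def CorrY (a1 a2 C1 C2 s t : ℝ) : ℝ :=
  CovY a1 a2 C1 C2 s t /
    (Real.sqrt (VarY a1 a2 C1 C2 s) * Real.sqrt (VarY a1 a2 C1 C2 t))

/-- Correlation function of the mixed fractional Poisson process. -/
noncomputable def CorrN (a1 a2 C1 C2 lam s t : ℝ) : ℝ :=
  CovN a1 a2 C1 C2 lam s t /
    (Real.sqrt (VarN a1 a2 C1 C2 lam s) * Real.sqrt (VarN a1 a2 C1 C2 lam t))

/-- Covariance function of the mixed fractional Poissonian noise. -/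
noncomputable def CovZ (a1 a2 C1 C2 lam δ s t : ℝ) : ℝ :=
  CovN a1 a2 C1 C2 lam (s + δ) (t + δ) + CovN a1 a2 C1 C2 lam s t
    - CovN a1 a2 C1 C2 lam (s + δ) t - CovN a1 a2 C1 C2 lam s (t + δ)

/-- Variance function of the mixed fractional Poissonian noise. -/
noncomputable def VarZ (a1 a2 C1 C2 lam δ t : ℝ) : ℝ := CovZ a1 a2 C1 C2 lam δ t t

/-- Correlation function of the mixed fractional Poissonian noise. -/
noncomputable def CorrZ (a1 a2 C1 C2 lam δ s t : ℝ) : ℝ :=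
  CovZ a1 a2 C1 C2 lam δ s t /
    (Real.sqrt (VarZ a1 a2 C1 C2 lam δ s) * Real.sqrt (VarZ a1 a2 C1 C2 lam δ t))

/-- Incomplete Beta function `B(a, b; x)`. -/
noncomputable def Binc (a b x : ℝ) : ℝ :=
  ∫ y in (0:ℝ)..x, y ^ (a - 1) * (1 - y) ^ (b - 1)


section MLProofAux
variable {a b x p q t : ℝ}


lemma gamma_grow {a : ℝ} (ha : 0 < a) (ha1 : a < 1) {y : ℝ} (hy : 0 < y) :
    y * Real.Gamma y ≤ Real.Gamma (y + a) * (y + a) ^ (1 - a) := by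
  have h1 : Real.Gamma (a * (y + a) + (1 - a) * (y + a + 1))
      ≤ Real.Gamma (y + a) ^ a * Real.Gamma (y + a + 1) ^ (1 - a) :=
    Real.Gamma_mul_add_mul_le_rpow_Gamma_mul_rpow_Gamma (by linarith) (by linarith) ha
      (by linarith) (by ring)
  have e1 : a * (y + a) + (1 - a) * (y + a + 1) = y + 1 := by ring
  rw [e1, Real.Gamma_add_one hy.ne'] at h1
  have hga : 0 < Real.Gamma (y + a) := Real.Gamma_pos_of_pos (by linarith)
  have e2 : Real.Gamma (y + a + 1) = (y + a) * Real.Gamma (y + a) :=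
    Real.Gamma_add_one (by positivity)
  rw [e2, Real.mul_rpow (by positivity) hga.le, ← mul_assoc] at h1
  calc y * Real.Gamma y
      ≤ Real.Gamma (y+a) ^ a * (y+a)^(1-a) * Real.Gamma (y+a) ^ (1-a) := h1
    _ = Real.Gamma (y + a) * (y + a) ^ (1 - a) := by
        rw [mul_right_comm, ← Real.rpow_add hga, add_sub_cancel, Real.rpow_one]

lemma summable_norm_ML2 {a : ℝ} (ha : 0 < a) (ha1 : a < 1) (b x : ℝ) :
    Summable (fun n : ℕ => ‖((n:ℝ)+1) * x ^ n / Real.Gamma ((n:ℝ)*a+b)‖) := by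
  set M : ℝ := max (max a 1) ((8*(|x|+1)) ^ (1/a)) with hM
  have htend : Tendsto (fun n : ℕ => (n:ℝ)*a + b) atTop atTop :=
    tendsto_atTop_add_const_right _ b (tendsto_natCast_atTop_atTop.atTop_mul_const ha)
  apply summable_of_ratio_norm_eventually_le (r := 1/2) (by norm_num)
  filter_upwards [htend.eventually_ge_atTop M] with n hn
  set y : ℝ := (n:ℝ)*a + b with hy
  have hy1 : 1 ≤ y := le_trans (le_trans (le_max_right a 1) (le_max_left _ _)) hn
  have hya : a ≤ y := le_trans (le_trans (le_max_left a 1) (le_max_left _ _)) hn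
  have hy0 : 0 < y := by linarith
  have hGy : 0 < Real.Gamma y := Real.Gamma_pos_of_pos hy0
  have hGya : 0 < Real.Gamma (y + a) := Real.Gamma_pos_of_pos (by linarith)
  have hx8 : (0:ℝ) < 8*(|x|+1) := by positivity
  have hq : 8*(|x|+1) ≤ (y+a)^a := by
    have h1 : (8*(|x|+1)) ^ (1/a) ≤ y + a :=
      le_trans (le_trans (le_max_right _ _) hn) (by linarith)
    have h2 : ((8*(|x|+1)) ^ (1/a)) ^ a ≤ (y+a)^a :=
      Real.rpow_le_rpow (by positivity) h1 ha.le
    rwa [← Real.rpow_mul hx8.le, one_div_mul_cancel ha.ne', Real.rpow_one] at h2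
  have hPQ : (y+a)^(1-a) * (y+a)^a = y + a := by
    rw [← Real.rpow_add (by linarith), sub_add_cancel, Real.rpow_one]
  have hpa : 0 < (y+a)^(1-a) := Real.rpow_pos_of_pos (by linarith) _
  have hQ0 : 0 < (y+a)^a := Real.rpow_pos_of_pos (by linarith) _
  have h2 : 4*(|x|+1) * (y+a)^(1-a) ≤ y := by
    nlinarith [abs_nonneg x]
  have hkey : 4*(|x|+1) * Real.Gamma y ≤ Real.Gamma (y + a) := by
    have h0 := gamma_grow ha ha1 hy0
    have h3 := mul_le_mul_of_nonneg_right h2 hGy.le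
    refine le_of_mul_le_mul_right ?_ hpa
    nlinarith
  -- now the ratio bound
  have hGcast : Real.Gamma ((↑(n+1):ℝ)*a+b) = Real.Gamma (y + a) := by
    congr 1; push_cast; ring
  rw [norm_norm, norm_norm, hGcast]
  have habs : ∀ m : ℕ, ‖((m:ℝ)+1) * x ^ m / Real.Gamma ((m:ℝ)*a+b)‖
      = ((m:ℝ)+1) * |x| ^ m / |Real.Gamma ((m:ℝ)*a+b)| := by
    intro m
    rw [Real.norm_eq_abs, abs_div, abs_mul, abs_pow, abs_of_pos (by positivity : (0:ℝ) < (m:ℝ)+1)]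
  rw [Real.norm_eq_abs, Real.norm_eq_abs, abs_div, abs_mul, abs_pow, abs_div, abs_mul, abs_pow,
    abs_of_pos (show (0:ℝ) < (↑(n+1):ℝ)+1 by positivity),
    abs_of_pos (show (0:ℝ) < (n:ℝ)+1 by positivity),
    abs_of_pos hGya, abs_of_pos (show (0:ℝ) < Real.Gamma y from hGy)]
  rw [mul_div_assoc']
  rw [div_le_div_iff₀ hGya hGy]
  push_cast
  have hxp : (0:ℝ) ≤ |x|^n := by positivity
  have h4 : ((n:ℝ)+1) * |x|^n * Real.Gamma (y+a)
      ≥ ((n:ℝ)+1) * |x|^n * (4*(|x|+1) * Real.Gamma y) :=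
    mul_le_mul_of_nonneg_left hkey (by positivity)
  have h5 : |x| ^ (n+1) = |x|^n * |x| := pow_succ _ _
  rw [h5]
  have hAG : (0:ℝ) ≤ |x|^n * Real.Gamma y := mul_nonneg hxp hGy.le
  nlinarith [h4, mul_nonneg hAG (abs_nonneg x), mul_nonneg hAG (Nat.cast_nonneg (α := ℝ) n),
    hAG, mul_nonneg (mul_nonneg hAG (abs_nonneg x)) (Nat.cast_nonneg (α := ℝ) n)]

lemma summable_ML2' (ha : 0 < a) (ha1 : a < 1) (b x : ℝ) :
    Summable (fun n : ℕ => ((n:ℝ)+1) * x ^ n / Real.Gamma ((n:ℝ)*a+b)) :=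
  (summable_norm_ML2 ha ha1 b x).of_norm

lemma summable_norm_ML (ha : 0 < a) (ha1 : a < 1) (b x : ℝ) :
    Summable (fun n : ℕ => ‖x ^ n / Real.Gamma ((n:ℝ)*a+b)‖) := by
  refine (summable_norm_ML2 ha ha1 b x).of_nonneg_of_le (fun n => norm_nonneg _) (fun n => ?_)
  have h : ((n:ℝ)+1) * x ^ n / Real.Gamma ((n:ℝ)*a+b)
      = ((n:ℝ)+1) * (x ^ n / Real.Gamma ((n:ℝ)*a+b)) := by ring
  rw [h, norm_mul]
  refine le_mul_of_one_le_left (norm_nonneg _) ?_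
  rw [Real.norm_eq_abs, abs_of_pos (show (0:ℝ) < (n:ℝ)+1 by positivity)]
  linarith [Nat.cast_nonneg (α := ℝ) n]

lemma summable_ML' (ha : 0 < a) (ha1 : a < 1) (b x : ℝ) :
    Summable (fun n : ℕ => x ^ n / Real.Gamma ((n:ℝ)*a+b)) :=
  (summable_norm_ML ha ha1 b x).of_norm

lemma betaReal_intervalIntegrable (hp : 0 < p) (hq : 0 < q) :
    IntervalIntegrable (fun y : ℝ => y^(p-1)*(1-y)^(q-1)) volume 0 1 := by
  have h := Complex.betaIntegral_convergent (u := (p:ℂ)) (v := (q:ℂ)) (by simpa) (by simpa)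
  rw [intervalIntegrable_iff_integrableOn_Ioc_of_le zero_le_one] at h ⊢
  refine (h.re).congr ?_
  refine (ae_restrict_iff' measurableSet_Ioc).mpr (Filter.Eventually.of_forall fun y hy => ?_)
  have h1 : ((y:ℂ) ^ ((p:ℂ)-1) * (1-(y:ℂ)) ^ ((q:ℂ)-1))
      = ((y^(p-1) * (1-y)^(q-1) : ℝ) : ℂ) := by
    rw [Complex.ofReal_mul, Complex.ofReal_cpow hy.1.le, Complex.ofReal_cpow (by linarith [hy.2])]
    push_cast
    ring_nf
  simp [h1]

lemma betaReal_value (hp : 0 < p) (hq : 0 < q) :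
    ∫ y in (0:ℝ)..1, y^(p-1)*(1-y)^(q-1)
      = Real.Gamma p * Real.Gamma q / Real.Gamma (p+q) := by
  have hΓ := Complex.Gamma_mul_Gamma_eq_betaIntegral (s := (p:ℂ)) (t := (q:ℂ))
    (by simpa) (by simpa)
  have hbeta : Complex.betaIntegral (p:ℂ) (q:ℂ)
      = ((∫ y in (0:ℝ)..1, y^(p-1)*(1-y)^(q-1) : ℝ) : ℂ) := by
    rw [Complex.betaIntegral, ← intervalIntegral.integral_ofReal]
    refine intervalIntegral.integral_congr fun y hy => ?_
    rw [Set.uIcc_of_le zero_le_one] at hy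
    rw [Complex.ofReal_mul, Complex.ofReal_cpow hy.1, Complex.ofReal_cpow (by linarith [hy.2])]
    push_cast
    ring_nf
  rw [hbeta, ← Complex.ofReal_add, Complex.Gamma_ofReal, Complex.Gamma_ofReal,
    Complex.Gamma_ofReal, ← Complex.ofReal_mul, ← Complex.ofReal_mul] at hΓ
  have h2 := Complex.ofReal_inj.mp hΓ
  have h3 : Real.Gamma (p+q) ≠ 0 := (Real.Gamma_pos_of_pos (by linarith)).ne'
  field_simp [h3]
  linarith [h2]

lemma beta_ptw (ht : 0 < t) {x : ℝ} (hx0 : 0 < x) (hxt : x ≤ t) :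
    t^(p-1)*t^(q-1) * ((x/t)^(p-1)*(1-x/t)^(q-1)) = x^(p-1)*(t-x)^(q-1) := by
  have h1 : t^(p-1) * (x/t)^(p-1) = x^(p-1) := by
    rw [← Real.mul_rpow ht.le (by positivity), mul_div_cancel₀ _ ht.ne']
  have h2 : t^(q-1) * (1-x/t)^(q-1) = (t-x)^(q-1) := by
    rw [← Real.mul_rpow ht.le (by
      rw [sub_nonneg, div_le_one ht]; exact hxt)]
    congr 1
    field_simp
  calc t^(p-1)*t^(q-1) * ((x/t)^(p-1)*(1-x/t)^(q-1))
      = (t^(p-1) * (x/t)^(p-1)) * (t^(q-1) * (1-x/t)^(q-1)) := by ring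
    _ = x^(p-1)*(t-x)^(q-1) := by rw [h1, h2]

lemma betaScaled_integrableOn (hp : 0 < p) (hq : 0 < q) (ht : 0 < t) :
    IntegrableOn (fun τ : ℝ => τ^(p-1)*(t-τ)^(q-1)) (Set.Ioc 0 t) := by
  have h0 := (betaReal_intervalIntegrable hp hq).comp_mul_left (c := 1/t)
  rw [zero_div, one_div_one_div] at h0
  rw [intervalIntegrable_iff_integrableOn_Ioc_of_le ht.le] at h0
  refine (h0.const_mul (t^(p-1)*t^(q-1))).congr
    ((ae_restrict_iff' measurableSet_Ioc).mpr (Filter.Eventually.of_forall fun x hx => ?_))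
  simp only []
  rw [show 1/t*x = x/t by ring]
  exact beta_ptw ht hx.1 hx.2

lemma betaScaled_value (hp : 0 < p) (hq : 0 < q) (ht : 0 < t) :
    ∫ τ in Set.Ioc (0:ℝ) t, τ^(p-1)*(t-τ)^(q-1)
      = t^(p+q-1) * (Real.Gamma p * Real.Gamma q / Real.Gamma (p+q)) := by
  rw [← intervalIntegral.integral_of_le ht.le]
  have step1 : ∫ τ in (0:ℝ)..t, τ^(p-1)*(t-τ)^(q-1)
      = ∫ τ in (0:ℝ)..t, t^(p-1)*t^(q-1) * ((τ/t)^(p-1)*(1-τ/t)^(q-1)) := by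
    rw [intervalIntegral.integral_of_le ht.le, intervalIntegral.integral_of_le ht.le]
    refine setIntegral_congr_fun measurableSet_Ioc fun x hx => (beta_ptw ht hx.1 hx.2).symm
  rw [step1, intervalIntegral.integral_const_mul]
  have step2 : (∫ τ in (0:ℝ)..t, (τ/t)^(p-1)*(1-τ/t)^(q-1))
      = t * ∫ y in (0:ℝ)..1, y^(p-1)*(1-y)^(q-1) := by
    have h := intervalIntegral.integral_comp_div (a := 0) (b := t) (c := t)
      (f := fun y : ℝ => y^(p-1)*(1-y)^(q-1)) ht.ne'
    rw [zero_div, div_self ht.ne', smul_eq_mul] at h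
    exact h
  rw [step2, betaReal_value hp hq]
  have e : t^(p-1)*t^(q-1)*t = t^(p+q-1) := by
    nth_rewrite 3 [← Real.rpow_one t]
    rw [← Real.rpow_add ht, ← Real.rpow_add ht]
    congr 1
    ring
  calc t^(p-1)*t^(q-1) * (t * (Real.Gamma p * Real.Gamma q / Real.Gamma (p+q)))
      = t^(p-1)*t^(q-1)*t * (Real.Gamma p * Real.Gamma q / Real.Gamma (p+q)) := by ring
    _ = _ := by rw [e]




lemma fiber_tsum {g : ℕ → ℝ} (n : ℕ) :
    ∑' c : (Finset.HasAntidiagonal.antidiagonal n : Finset (ℕ × ℕ)), g ((c : ℕ × ℕ).1 + (c : ℕ × ℕ).2)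
      = ((n:ℝ)+1) * g n := by
  rw [tsum_fintype]
  have h : ∀ c : (Finset.HasAntidiagonal.antidiagonal n : Finset (ℕ × ℕ)),
      g ((c : ℕ × ℕ).1 + (c : ℕ × ℕ).2) = g n := by
    intro c
    rw [Finset.HasAntidiagonal.mem_antidiagonal.mp c.2]
  rw [Finset.sum_congr rfl (fun c _ => h c), Finset.sum_const, Finset.card_univ,
    Fintype.card_coe, Finset.Nat.card_antidiagonal, nsmul_eq_mul]
  push_cast
  ring

lemma summable_prod_diag {v : ℕ → ℝ} (hv : Summable fun n : ℕ => ((n:ℝ)+1) * ‖v n‖) :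
    Summable fun p : ℕ × ℕ => v (p.1 + p.2) := by
  apply Summable.of_norm
  rw [← Finset.HasAntidiagonal.sigmaAntidiagonalEquivProd.summable_iff]
  have hnn : ∀ x : (Σ n : ℕ, (Finset.HasAntidiagonal.antidiagonal n : Finset (ℕ × ℕ))),
      0 ≤ ((fun p : ℕ × ℕ => ‖v (p.1 + p.2)‖) ∘ Finset.HasAntidiagonal.sigmaAntidiagonalEquivProd) x :=
    fun x => norm_nonneg _
  rw [summable_sigma_of_nonneg hnn]
  constructor
  · intro n
    exact Summable.of_finite
  · refine hv.congr fun n => ?_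
    exact (fiber_tsum (g := fun m => ‖v m‖) n).symm

lemma tsum_prod_diag {v : ℕ → ℝ} (hv : Summable fun n : ℕ => ((n:ℝ)+1) * ‖v n‖) :
    ∑' p : ℕ × ℕ, v (p.1 + p.2) = ∑' n : ℕ, ((n:ℝ)+1) * v n := by
  rw [← Finset.HasAntidiagonal.sigmaAntidiagonalEquivProd.tsum_eq (fun p : ℕ × ℕ => v (p.1 + p.2))]
  have h1 := Summable.tsum_sigma'
    (f := fun c : (Σ n : ℕ, (Finset.HasAntidiagonal.antidiagonal n : Finset (ℕ × ℕ))) =>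
      v ((Finset.HasAntidiagonal.sigmaAntidiagonalEquivProd c).1 + (Finset.HasAntidiagonal.sigmaAntidiagonalEquivProd c).2))
    (fun n => Summable.of_finite)
    (Finset.HasAntidiagonal.sigmaAntidiagonalEquivProd.summable_iff.mpr (summable_prod_diag hv))
  rw [h1]
  exact tsum_congr fun n => fiber_tsum n

lemma term_eq {c s r a b θ : ℝ} (hs : 0 < s) (j : ℕ) :
    s^θ/c * ((r*s^a)^j / Real.Gamma ((j:ℝ)*a+b))
      = r^j/(c*Real.Gamma ((j:ℝ)*a+b)) * s^((j:ℝ)*a+θ) := by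
  have h1 : (s^a)^j = s^((j:ℝ)*a) := by
    rw [← Real.rpow_natCast (s^a) j, ← Real.rpow_mul hs.le, mul_comm]
  have h2 : s^((j:ℝ)*a+θ) = s^((j:ℝ)*a) * s^θ := Real.rpow_add hs _ _
  rw [mul_pow, h1, h2]
  ring

noncomputable def cUf (r C1 a a1 : ℝ) (j : ℕ) : ℝ :=
  r^j/(C1 * Real.Gamma ((j:ℝ)*a+(a1+1)))
noncomputable def cuf (r C1 a a1 : ℝ) (k : ℕ) : ℝ :=
  r^k/(C1 * Real.Gamma ((k:ℝ)*a+a1))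
noncomputable def Fp (r C1 a a1 t : ℝ) (p : ℕ × ℕ) (τ : ℝ) : ℝ :=
  cUf r C1 a a1 p.1 * cuf r C1 a a1 p.2
    * (τ^((p.2:ℝ)*a+a1-1) * (t-τ)^((p.1:ℝ)*a+a1))

set_option maxHeartbeats 2000000 in
lemma key (a1 a2 C1 C2 : ℝ) (ha2 : 0 < a2) (ha12 : a2 < a1) (ha1 : a1 < 1)
    (hC1 : 0 < C1) (hC2 : 0 < C2) (t : ℝ) (ht : 0 < t) :
    (∫ τ in (0:ℝ)..t, Ufun a1 a2 C1 C2 (t - τ) * ufun a1 a2 C1 C2 τ)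
      = t ^ (2*a1) / C1^2 * ML2 (a1-a2) (2*a1+1) (-C2 * t ^ (a1-a2) / C1) := by
  obtain ⟨a, ha_def⟩ : ∃ a : ℝ, a = a1 - a2 := ⟨_, rfl⟩
  rw [← ha_def]
  have ha : 0 < a := by rw [ha_def]; linarith
  have ha' : a < 1 := by rw [ha_def]; linarith
  have ha1p : 0 < a1 := lt_trans ha2 ha12
  obtain ⟨r, hr_def⟩ : ∃ r : ℝ, r = -C2/C1 := ⟨_, rfl⟩
  obtain ⟨X, hX_def⟩ : ∃ X : ℝ, X = -C2 * t ^ a / C1 := ⟨_, rfl⟩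
  rw [← hX_def]
  have hXr : X = r * t^a := by rw [hX_def, hr_def]; ring
  obtain ⟨Z, hZ_def⟩ : ∃ Z : ℝ, Z = |r| * t^a := ⟨_, rfl⟩
  -- expansions
  have hU : ∀ s : ℝ, 0 < s →
      Ufun a1 a2 C1 C2 s = ∑' j : ℕ, cUf r C1 a a1 j * s^((j:ℝ)*a+a1) := by
    intro s hs
    simp only [Ufun, ML, ← ha_def]
    have hx : -C2 * s ^ a / C1 = r * s^a := by rw [hr_def]; ring
    rw [hx, ← tsum_mul_left]
    exact tsum_congr fun j => term_eq hs j
  have hu : ∀ s : ℝ, 0 < s →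
      ufun a1 a2 C1 C2 s = ∑' k : ℕ, cuf r C1 a a1 k * s^((k:ℝ)*a+(a1-1)) := by
    intro s hs
    simp only [ufun, ML, ← ha_def]
    have hx : -C2 * s ^ a / C1 = r * s^a := by rw [hr_def]; ring
    rw [hx, ← tsum_mul_left]
    exact tsum_congr fun k => term_eq hs k
  -- summability of the expansions
  have hgN : ∀ s : ℝ, 0 < s → Summable (fun j : ℕ => ‖cUf r C1 a a1 j * s^((j:ℝ)*a+a1)‖) := by
    intro s hs
    refine ((summable_norm_ML ha ha' (a1+1) (r*s^a)).mul_left ‖s^a1/C1‖).congr fun j => ?_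
    rw [← norm_mul, term_eq hs j]
    rfl
  have hhN : ∀ s : ℝ, 0 < s →
      Summable (fun k : ℕ => ‖cuf r C1 a a1 k * s^((k:ℝ)*a+(a1-1))‖) := by
    intro s hs
    refine ((summable_norm_ML ha ha' a1 (r*s^a)).mul_left ‖s^(a1-1)/C1‖).congr fun k => ?_
    rw [← norm_mul, term_eq hs k]
    rfl
  have hg : ∀ s : ℝ, 0 < s → Summable (fun j : ℕ => cUf r C1 a a1 j * s^((j:ℝ)*a+a1)) :=
    fun s hs => (hgN s hs).of_norm
  have hh : ∀ s : ℝ, 0 < s → Summable (fun k : ℕ => cuf r C1 a a1 k * s^((k:ℝ)*a+(a1-1))) :=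
    fun s hs => (hhN s hs).of_norm
  -- pointwise identity on Ioc
  have hpt : Set.EqOn (fun τ => Ufun a1 a2 C1 C2 (t-τ) * ufun a1 a2 C1 C2 τ)
      (fun τ => ∑' p : ℕ × ℕ, Fp r C1 a a1 t p τ) (Set.Ioc 0 t) := by
    intro τ hτ
    rcases eq_or_lt_of_le hτ.2 with heq | hlt
    · have h0 : Ufun a1 a2 C1 C2 (t-τ) = 0 := by
        rw [heq, sub_self]
        simp only [Ufun]
        rw [Real.zero_rpow ha1p.ne', zero_div, zero_mul]
      have h1 : ∀ p : ℕ × ℕ, Fp r C1 a a1 t p τ = 0 := by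
        intro p
        simp only [Fp]
        rw [heq, sub_self, Real.zero_rpow (show ((p.1:ℝ)*a+a1) ≠ 0 by positivity),
          mul_zero, mul_zero]
      show Ufun a1 a2 C1 C2 (t-τ) * ufun a1 a2 C1 C2 τ = ∑' p : ℕ × ℕ, Fp r C1 a a1 t p τ
      rw [h0, zero_mul]
      exact ((tsum_congr h1).trans tsum_zero).symm
    · have hs : 0 < t - τ := sub_pos.mpr hlt
      simp only []
      rw [hU _ hs, hu _ hτ.1,
        Summable.tsum_mul_tsum (hg _ hs) (hh _ hτ.1)
          (summable_mul_of_summable_norm (hgN _ hs) (hhN _ hτ.1))]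
      refine tsum_congr fun p => ?_
      simp only [Fp]
      rw [show (p.2:ℝ)*a+(a1-1) = (p.2:ℝ)*a+a1-1 by ring]
      ring
  -- integrability of each term
  have hP : ∀ p : ℕ × ℕ, (0:ℝ) < (p.2:ℝ)*a+a1 := fun p => by positivity
  have hQ : ∀ p : ℕ × ℕ, (0:ℝ) < (p.1:ℝ)*a+(a1+1) := fun p => by positivity
  have hFeq : ∀ p : ℕ × ℕ, Fp r C1 a a1 t p = fun τ =>
      (cUf r C1 a a1 p.1 * cuf r C1 a a1 p.2)
        * (τ^(((p.2:ℝ)*a+a1)-1) * (t-τ)^(((p.1:ℝ)*a+(a1+1))-1)) := by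
    intro p
    funext τ
    simp only [Fp]
    rw [show (p.1:ℝ)*a+(a1+1)-1 = (p.1:ℝ)*a+a1 by ring]
  have hInt : ∀ p : ℕ × ℕ, IntegrableOn (Fp r C1 a a1 t p) (Set.Ioc 0 t) := by
    intro p
    rw [hFeq p]
    exact (betaScaled_integrableOn (hP p) (hQ p) ht).const_mul _
  -- positivity of the Gammas
  have hGU : ∀ j : ℕ, 0 < Real.Gamma ((j:ℝ)*a+(a1+1)) :=
    fun j => Real.Gamma_pos_of_pos (by positivity)
  have hGu : ∀ k : ℕ, 0 < Real.Gamma ((k:ℝ)*a+a1) :=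
    fun k => Real.Gamma_pos_of_pos (by positivity)
  have hGX : ∀ n : ℕ, 0 < Real.Gamma ((n:ℝ)*a+(2*a1+1)) :=
    fun n => Real.Gamma_pos_of_pos (by positivity)
  -- values of the integrals
  have hT : ∀ p : ℕ × ℕ, t^(((p.2:ℝ)*a+a1)+((p.1:ℝ)*a+(a1+1))-1)
      = t^(2*a1) * (t^a)^(p.1+p.2) := by
    intro p
    rw [← Real.rpow_natCast (t^a) (p.1+p.2), ← Real.rpow_mul ht.le, ← Real.rpow_add ht]
    congr 1
    push_cast
    ring
  have hΓeq : ∀ p : ℕ × ℕ, Real.Gamma (((p.1+p.2 : ℕ):ℝ)*a+(2*a1+1))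
      = Real.Gamma (((p.2:ℝ)*a+a1)+((p.1:ℝ)*a+(a1+1))) := by
    intro p
    congr 1
    push_cast
    ring
  have hval : ∀ p : ℕ × ℕ, (∫ τ in Set.Ioc (0:ℝ) t, Fp r C1 a a1 t p τ)
      = (t^(2*a1)/C1^2)
        * (X^(p.1+p.2) / Real.Gamma (((p.1+p.2 : ℕ):ℝ)*a+(2*a1+1))) := by
    intro p
    rw [hFeq p, MeasureTheory.integral_const_mul _ _, betaScaled_value (hP p) (hQ p) ht,
      hΓeq p, hT p]
    simp only [cUf, cuf]
    rw [hXr, mul_pow, pow_add r, ← Real.rpow_natCast (t^a) (p.1+p.2)]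
    have hG1 := (hGU p.1).ne'
    have hG2 := (hGu p.2).ne'
    have hG3 : Real.Gamma (((p.2:ℝ)*a+a1)+((p.1:ℝ)*a+(a1+1))) ≠ 0 :=
      (Real.Gamma_pos_of_pos (by positivity)).ne'
    field_simp
  have hvalN : ∀ p : ℕ × ℕ, (∫ τ in Set.Ioc (0:ℝ) t, ‖Fp r C1 a a1 t p τ‖)
      = (t^(2*a1)/C1^2)
        * (Z^(p.1+p.2) / Real.Gamma (((p.1+p.2 : ℕ):ℝ)*a+(2*a1+1))) := by
    intro p
    have hstep : ∀ τ ∈ Set.Ioc (0:ℝ) t, ‖Fp r C1 a a1 t p τ‖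
        = (|r|^p.1/(C1 * Real.Gamma ((p.1:ℝ)*a+(a1+1)))
            * (|r|^p.2/(C1 * Real.Gamma ((p.2:ℝ)*a+a1))))
          * (τ^(((p.2:ℝ)*a+a1)-1) * (t-τ)^(((p.1:ℝ)*a+(a1+1))-1)) := by
      intro τ hτ
      rw [hFeq p]
      rw [norm_mul, norm_mul, Real.norm_eq_abs, Real.norm_eq_abs, Real.norm_eq_abs]
      simp only [cUf, cuf]
      rw [abs_div, abs_pow, abs_of_pos (mul_pos hC1 (hGU p.1)),
        abs_div, abs_pow, abs_of_pos (mul_pos hC1 (hGu p.2)),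
        abs_of_nonneg (mul_nonneg (Real.rpow_nonneg hτ.1.le _)
          (Real.rpow_nonneg (by linarith [hτ.2] : (0:ℝ) ≤ t - τ) _))]
    rw [setIntegral_congr_fun measurableSet_Ioc hstep, MeasureTheory.integral_const_mul _ _,
      betaScaled_value (hP p) (hQ p) ht, hΓeq p, hT p]
    rw [hZ_def, mul_pow, pow_add |r|, ← Real.rpow_natCast (t^a) (p.1+p.2)]
    have hG1 := (hGU p.1).ne'
    have hG2 := (hGu p.2).ne'
    have hG3 : Real.Gamma (((p.2:ℝ)*a+a1)+((p.1:ℝ)*a+(a1+1))) ≠ 0 :=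
      (Real.Gamma_pos_of_pos (by positivity)).ne'
    field_simp
  -- summability for the interchange
  have hv2 : Summable (fun n : ℕ => ((n:ℝ)+1) * ‖Z^n / Real.Gamma ((n:ℝ)*a+(2*a1+1))‖) := by
    refine (summable_norm_ML2 ha ha' (2*a1+1) Z).congr fun n => ?_
    rw [mul_div_assoc, norm_mul, Real.norm_eq_abs (((n:ℝ))+1),
      abs_of_pos (show (0:ℝ) < (n:ℝ)+1 by positivity)]
  have hw2 : Summable (fun n : ℕ => ((n:ℝ)+1) * ‖X^n / Real.Gamma ((n:ℝ)*a+(2*a1+1))‖) := by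
    refine (summable_norm_ML2 ha ha' (2*a1+1) X).congr fun n => ?_
    rw [mul_div_assoc, norm_mul, Real.norm_eq_abs (((n:ℝ))+1),
      abs_of_pos (show (0:ℝ) < (n:ℝ)+1 by positivity)]
  have hSum : Summable (fun p : ℕ × ℕ => ∫ τ in Set.Ioc (0:ℝ) t, ‖Fp r C1 a a1 t p τ‖) := by
    refine (((summable_prod_diag hv2).mul_left (t^(2*a1)/C1^2))).congr fun p => ?_
    exact (hvalN p).symm
  -- assemble
  rw [intervalIntegral.integral_of_le ht.le]
  calc (∫ τ in Set.Ioc (0:ℝ) t, Ufun a1 a2 C1 C2 (t-τ) * ufun a1 a2 C1 C2 τ)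
      = ∫ τ in Set.Ioc (0:ℝ) t, ∑' p : ℕ × ℕ, Fp r C1 a a1 t p τ :=
        setIntegral_congr_fun measurableSet_Ioc hpt
    _ = ∑' p : ℕ × ℕ, ∫ τ in Set.Ioc (0:ℝ) t, Fp r C1 a a1 t p τ :=
        (MeasureTheory.integral_tsum_of_summable_integral_norm hInt hSum).symm
    _ = ∑' p : ℕ × ℕ, (t^(2*a1)/C1^2)
          * (X^(p.1+p.2) / Real.Gamma (((p.1+p.2 : ℕ):ℝ)*a+(2*a1+1))) :=
        tsum_congr hval
    _ = (t^(2*a1)/C1^2) * ∑' p : ℕ × ℕ,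
          (X^(p.1+p.2) / Real.Gamma (((p.1+p.2 : ℕ):ℝ)*a+(2*a1+1))) := tsum_mul_left
    _ = (t^(2*a1)/C1^2) * ∑' n : ℕ,
          ((n:ℝ)+1) * (X^n / Real.Gamma ((n:ℝ)*a+(2*a1+1))) := by
        rw [tsum_prod_diag hw2]
    _ = t ^ (2*a1) / C1^2 * ML2 a (2*a1+1) X := by
        rw [ML2]
        congr 1
        exact tsum_congr fun n => (mul_div_assoc _ _ _).symm

end MLProofAux

set_option maxHeartbeats 1000000

/-- For every `t > 0`, the variance of the inverse mixed stable subordinator satisfies the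
exact identity `Var_Y(t) = (2 t^{2α₁}/C₁²) E²_{α₁-α₂, 2α₁+1}(-C₂ t^{α₁-α₂}/C₁) - U(t)²`;
equivalently, `∫₀^t 2 U(t-τ) u(τ) dτ` equals the first term. -/


theorem stmt_0 (a1 a2 C1 C2 : ℝ) (ha2 : 0 < a2) (ha12 : a2 < a1) (ha1 : a1 < 1)
    (hC1 : 0 < C1) (hC2 : 0 < C2) (hC : C1 + C2 = 1) (t : ℝ) (ht : 0 < t) :
    VarY a1 a2 C1 C2 t
      = 2 * t ^ (2 * a1) / C1 ^ 2 * ML2 (a1 - a2) (2 * a1 + 1) (-C2 * t ^ (a1 - a2) / C1)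
        - (Ufun a1 a2 C1 C2 t) ^ 2
    ∧ (∫ τ in (0:ℝ)..t, 2 * Ufun a1 a2 C1 C2 (t - τ) * ufun a1 a2 C1 C2 τ)
      = 2 * t ^ (2 * a1) / C1 ^ 2 * ML2 (a1 - a2) (2 * a1 + 1) (-C2 * t ^ (a1 - a2) / C1) := by
  have hkey := key a1 a2 C1 C2 ha2 ha12 ha1 hC1 hC2 t ht
  have h2 : (∫ τ in (0:ℝ)..t, 2 * Ufun a1 a2 C1 C2 (t - τ) * ufun a1 a2 C1 C2 τ)
      = 2 * t ^ (2 * a1) / C1 ^ 2 * ML2 (a1 - a2) (2 * a1 + 1) (-C2 * t ^ (a1 - a2) / C1) := by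
    have e1 : (∫ τ in (0:ℝ)..t, 2 * Ufun a1 a2 C1 C2 (t - τ) * ufun a1 a2 C1 C2 τ)
        = ∫ τ in (0:ℝ)..t, 2 * (Ufun a1 a2 C1 C2 (t - τ) * ufun a1 a2 C1 C2 τ) :=
      intervalIntegral.integral_congr fun τ _ => by ring
    rw [e1, intervalIntegral.integral_const_mul, hkey]
    ring
  refine ⟨?_, h2⟩
  have e2 : VarY a1 a2 C1 C2 t
      = (∫ τ in (0:ℝ)..t, 2 * Ufun a1 a2 C1 C2 (t - τ) * ufun a1 a2 C1 C2 τ)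
        - (Ufun a1 a2 C1 C2 t) ^ 2 := by
    rw [VarY, CovY, min_self]
    have e3 : (∫ τ in (0:ℝ)..t,
          (Ufun a1 a2 C1 C2 (t - τ) + Ufun a1 a2 C1 C2 (t - τ)) * ufun a1 a2 C1 C2 τ)
        = ∫ τ in (0:ℝ)..t, 2 * Ufun a1 a2 C1 C2 (t - τ) * ufun a1 a2 C1 C2 τ :=
      intervalIntegral.integral_congr fun τ _ => by ring
    rw [e3]
    ring
  rw [e2, h2]
end

section
/- For every 0 < s ≤ t, the integral I(s,t) = ∫₀^s U(t−τ) u(τ) dτ equals the double series (1/C₁²) ∑_{m=0}^∞ ∑_{k=0}^∞ (−C₂/C₁)^{m+k} t^{(m+k)(α₁−α₂)+2α₁} / (Γ(m(α₁−α₂)+α₁+1) Γ(k(α₁−α₂)+α₁)) · B(k(α₁−α₂)+α₁, m(α₁−α₂)+α₁+1; s/t), where B(a,b;x) = ∫₀^x y^{a−1}(1−y)^{b−1} dy is the incomplete Beta function. -/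
open Real MeasureTheory Filter Topology

/-- Gautschi-type lower bound from log-convexity of Γ. -/
lemma gautschi {y ρ : ℝ} (hy : 0 < y) (hρ : 0 < ρ) (hρ1 : ρ ≤ 1) :
    y * Real.Gamma y ≤ Real.Gamma (y + ρ) * (y + ρ) ^ (1 - ρ) := by
  have hyρ : 0 < y + ρ := by linarith
  have h1 : Real.Gamma (y + 1) ≤ Real.Gamma (y + ρ) * (y + ρ) ^ (1 - ρ) := by
    rcases eq_or_lt_of_le hρ1 with h | h
    · subst h; simp
    have hconv := Real.convexOn_log_Gamma.2 (Set.mem_Ioi.2 hyρ)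
      (Set.mem_Ioi.2 (by linarith : (0:ℝ) < y + 1 + ρ)) hρ.le (by linarith : (0:ℝ) ≤ 1 - ρ)
      (by ring)
    have hcomb : ρ • (y + ρ) + (1 - ρ) • (y + 1 + ρ) = y + 1 := by
      simp [smul_eq_mul]; ring
    rw [hcomb] at hconv
    simp only [Function.comp_apply, smul_eq_mul] at hconv
    have hG1 : Real.Gamma (y + 1 + ρ) = (y + ρ) * Real.Gamma (y + ρ) := by
      have := Real.Gamma_add_one (ne_of_gt hyρ)
      rw [show y + 1 + ρ = y + ρ + 1 by ring, this]
    rw [hG1, Real.log_mul (ne_of_gt hyρ) (ne_of_gt (Real.Gamma_pos_of_pos hyρ))] at hconv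
    have hGyρ : 0 < Real.Gamma (y + ρ) := Real.Gamma_pos_of_pos hyρ
    have hexp : Real.Gamma (y + 1) = Real.exp (Real.log (Real.Gamma (y + 1))) :=
      (Real.exp_log (Real.Gamma_pos_of_pos (by linarith))).symm
    rw [hexp]
    have hrhs : Real.Gamma (y + ρ) * (y + ρ) ^ (1 - ρ) =
        Real.exp (Real.log (Real.Gamma (y + ρ)) + (1 - ρ) * Real.log (y + ρ)) := by
      rw [Real.exp_add, Real.exp_log hGyρ, Real.rpow_def_of_pos hyρ, mul_comm (Real.log (y + ρ))]
    rw [hrhs]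
    apply Real.exp_le_exp.2
    nlinarith [hconv]
  calc y * Real.Gamma y = Real.Gamma (y + 1) := by
        rw [Real.Gamma_add_one (ne_of_gt hy)]
    _ ≤ _ := h1

/-- Summability of Mittag-Leffler type series. -/
lemma summable_ml {ρ b : ℝ} (hρ : 0 < ρ) (hρ1 : ρ ≤ 1) (hb : 0 < b) (x : ℝ) :
    Summable (fun k : ℕ => x ^ k / Real.Gamma ((k : ℝ) * ρ + b)) := by
  apply summable_of_ratio_norm_eventually_le (r := 1/2) (by norm_num)
  have htend : Tendsto (fun k : ℕ => ((k : ℝ) * ρ + b) ^ ρ) atTop atTop := by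
    apply (tendsto_rpow_atTop hρ).comp
    exact (tendsto_natCast_atTop_atTop.atTop_mul_const hρ).atTop_add tendsto_const_nhds
  have h1 : ∀ᶠ k : ℕ in atTop, (1:ℝ) ≤ (k : ℝ) * ρ + b := by
    have : Tendsto (fun k : ℕ => (k : ℝ) * ρ + b) atTop atTop :=
      (tendsto_natCast_atTop_atTop.atTop_mul_const hρ).atTop_add tendsto_const_nhds
    exact this.eventually_ge_atTop 1
  filter_upwards [h1, htend.eventually_ge_atTop (4 * |x|)] with k hk1 hk2
  set y := (k : ℝ) * ρ + b with hy
  have hy0 : 0 < y := by linarith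
  have hGy : 0 < Real.Gamma y := Real.Gamma_pos_of_pos hy0
  have hGyρ : 0 < Real.Gamma (y + ρ) := Real.Gamma_pos_of_pos (by linarith)
  have harg : ((k:ℝ) + 1) * ρ + b = y + ρ := by rw [hy]; ring
  have key : 2 * |x| * Real.Gamma y ≤ Real.Gamma (y + ρ) := by
    have hga := gautschi hy0 hρ hρ1
    have hP : (0:ℝ) < (y + ρ) ^ (1 - ρ) := Real.rpow_pos_of_pos (by linarith) _
    have hb1 : (y + ρ) ^ (1 - ρ) ≤ 2 * y ^ (1 - ρ) := by
      calc (y + ρ) ^ (1 - ρ) ≤ (2 * y) ^ (1 - ρ) :=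
            Real.rpow_le_rpow (by linarith) (by linarith) (by linarith)
        _ = 2 ^ (1 - ρ) * y ^ (1 - ρ) := Real.mul_rpow (by norm_num) (by linarith)
        _ ≤ 2 * y ^ (1 - ρ) := by
            have : (2:ℝ) ^ (1 - ρ) ≤ 2 ^ (1:ℝ) :=
              Real.rpow_le_rpow_of_exponent_le (by norm_num) (by linarith)
            rw [Real.rpow_one] at this
            exact mul_le_mul_of_nonneg_right this (Real.rpow_nonneg (by linarith) _)
    have hb2 : 4 * |x| * y ^ (1 - ρ) ≤ y := by
      have := mul_le_mul_of_nonneg_right hk2 (Real.rpow_nonneg hy0.le (1 - ρ))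
      calc 4 * |x| * y ^ (1 - ρ) ≤ y ^ ρ * y ^ (1 - ρ) := this
        _ = y := by rw [← Real.rpow_add hy0]; norm_num
    have hyG : 0 < y ^ (1 - ρ) := Real.rpow_pos_of_pos hy0 _
    -- 2|x| Γ(y) (y+ρ)^{1-ρ} ≤ 4|x| y^{1-ρ} Γ(y) ≤ y Γ(y) ≤ Γ(y+ρ)(y+ρ)^{1-ρ}
    have chain : 2 * |x| * Real.Gamma y * ((y + ρ) ^ (1 - ρ)) ≤
        Real.Gamma (y + ρ) * (y + ρ) ^ (1 - ρ) :=
      calc 2 * |x| * Real.Gamma y * ((y + ρ) ^ (1 - ρ))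
          ≤ 2 * |x| * Real.Gamma y * (2 * y ^ (1 - ρ)) :=
            mul_le_mul_of_nonneg_left hb1
              (by positivity)
        _ = 4 * |x| * y ^ (1 - ρ) * Real.Gamma y := by ring
        _ ≤ y * Real.Gamma y := mul_le_mul_of_nonneg_right hb2 hGy.le
        _ ≤ _ := hga
    exact le_of_mul_le_mul_right (by linarith [chain]) hP
  push_cast
  rw [harg]
  have hnorm : ∀ z A : ℝ, 0 < A → ‖z / A‖ = |z| / A := by
    intro z A hA; rw [norm_div, Real.norm_eq_abs, Real.norm_eq_abs, abs_of_pos hA]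
  rw [hnorm _ _ hGyρ, hnorm _ _ hGy, abs_pow, abs_pow, pow_succ, div_le_iff₀ hGyρ]
  have h2 : |x| ≤ Real.Gamma (y + ρ) / (2 * Real.Gamma y) := by
    rw [le_div_iff₀ (by positivity)]
    nlinarith [key]
  calc |x| ^ k * |x| ≤ |x| ^ k * (Real.Gamma (y + ρ) / (2 * Real.Gamma y)) :=
        mul_le_mul_of_nonneg_left h2 (pow_nonneg (abs_nonneg x) k)
    _ = 1 / 2 * (|x| ^ k / Real.Gamma y) * Real.Gamma (y + ρ) := by
        field_simp

lemma core_integral {s t A B : ℝ} (hs : 0 < s) (hst : s ≤ t) (hA : 0 < A) (hB : 0 < B) :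
    ∫ τ in (0:ℝ)..s, (t - τ) ^ A * τ ^ (B - 1) = t ^ (A + B) * Binc B (A + 1) (s / t) := by
  have ht : 0 < t := lt_of_lt_of_le hs hst
  have hst1 : s / t ≤ 1 := (div_le_one ht).2 hst
  have hcomp := intervalIntegral.integral_comp_mul_left
    (a := (0:ℝ)) (b := s / t) (fun τ => (t - τ) ^ A * τ ^ (B - 1)) (ne_of_gt ht)
  rw [mul_zero, mul_div_cancel₀ _ (ne_of_gt ht)] at hcomp
  have h2 : (∫ y in (0:ℝ)..(s / t), (t - t * y) ^ A * (t * y) ^ (B - 1))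
      = (t ^ A * t ^ (B - 1)) * ∫ y in (0:ℝ)..(s / t), y ^ (B - 1) * (1 - y) ^ A := by
    rw [← intervalIntegral.integral_const_mul]
    apply intervalIntegral.integral_congr
    intro y hy
    rw [Set.uIcc_of_le (by positivity)] at hy
    obtain ⟨hy0, hy1⟩ := hy
    have h1y : (0:ℝ) ≤ 1 - y := by linarith [hy1.trans hst1]
    have e1 : t - t * y = t * (1 - y) := by ring
    show (t - t * y) ^ A * (t * y) ^ (B - 1) = t ^ A * t ^ (B - 1) * (y ^ (B - 1) * (1 - y) ^ A)
    rw [e1, Real.mul_rpow ht.le h1y, Real.mul_rpow ht.le hy0]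
    ring
  have h3 : t ^ (A + B) = t ^ A * t ^ (B - 1) * t := by
    rw [show A + B = A + (B - 1) + 1 by ring, Real.rpow_add ht, Real.rpow_add ht, Real.rpow_one]
  have hBinc : Binc B (A + 1) (s / t) = ∫ y in (0:ℝ)..(s / t), y ^ (B - 1) * (1 - y) ^ A := by
    unfold Binc
    norm_num
  calc ∫ τ in (0:ℝ)..s, (t - τ) ^ A * τ ^ (B - 1)
      = t • ∫ y in (0:ℝ)..(s / t), (t - t * y) ^ A * (t * y) ^ (B - 1) := by
        rw [hcomp, smul_smul, mul_inv_cancel₀ (ne_of_gt ht), one_smul]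
    _ = t ^ (A + B) * Binc B (A + 1) (s / t) := by
        rw [h2, hBinc, smul_eq_mul, h3]; ring

lemma ml_norm_summable {ρ b : ℝ} (hρ : 0 < ρ) (hρ1 : ρ ≤ 1) (hb : 0 < b) (c x : ℝ) :
    Summable fun m : ℕ => ‖c * (x ^ m / Real.Gamma ((m : ℝ) * ρ + b))‖ := by
  have h0 : ∀ m : ℕ, |c| * (|x| ^ m / Real.Gamma ((m : ℝ) * ρ + b))
      = ‖c * (x ^ m / Real.Gamma ((m : ℝ) * ρ + b))‖ := by
    intro m
    have hG : 0 < Real.Gamma ((m : ℝ) * ρ + b) :=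
      Real.Gamma_pos_of_pos (by positivity)
    rw [norm_mul, norm_div, norm_pow, Real.norm_eq_abs, Real.norm_eq_abs, Real.norm_eq_abs,
      abs_of_pos hG]
  exact Summable.congr ((summable_ml hρ hρ1 hb |x|).mul_left |c|) h0

lemma ml_prod_rep {ρ b1 b2 : ℝ} (hρ : 0 < ρ) (hρ1 : ρ ≤ 1) (hb1 : 0 < b1) (hb2 : 0 < b2)
    (c1 c2 x y : ℝ) :
    (c1 * ML ρ b1 x) * (c2 * ML ρ b2 y)
      = ∑' p : ℕ × ℕ, (c1 * (x ^ p.1 / Real.Gamma ((p.1 : ℝ) * ρ + b1)))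
          * (c2 * (y ^ p.2 / Real.Gamma ((p.2 : ℝ) * ρ + b2))) := by
  rw [ML, ML, ← tsum_mul_left, ← tsum_mul_left]
  exact tsum_mul_tsum_of_summable_norm (ml_norm_summable hρ hρ1 hb1 c1 x)
    (ml_norm_summable hρ hρ1 hb2 c2 y)

lemma pow_rpow_split {z : ℝ} (hz : 0 < z) (c ρ e : ℝ) (m : ℕ) :
    c ^ m * z ^ ((m : ℝ) * ρ + e) = (c * z ^ ρ) ^ m * z ^ e := by
  rw [mul_pow, ← Real.rpow_natCast (z ^ ρ) m, ← Real.rpow_mul hz.le, mul_comm ρ (m : ℝ),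
    Real.rpow_add hz]
  ring

lemma pow_rpow_split' {z : ℝ} (hz : 0 ≤ z) (c ρ e : ℝ) (m : ℕ) (h : (m : ℝ) * ρ + e ≠ 0) :
    c ^ m * z ^ ((m : ℝ) * ρ + e) = (c * z ^ ρ) ^ m * z ^ e := by
  rw [mul_pow, ← Real.rpow_natCast (z ^ ρ) m, ← Real.rpow_mul hz, mul_comm ρ (m : ℝ),
    Real.rpow_add' hz h]
  ring

lemma main_aux (ρ a1 C1 C2 s t : ℝ) (hρ : 0 < ρ) (hρ1 : ρ ≤ 1) (ha1 : 0 < a1)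
    (hC1 : 0 < C1) (hC2 : 0 < C2) (hs : 0 < s) (hst : s ≤ t) :
    (∫ τ in (0:ℝ)..s,
        ((t - τ) ^ a1 / C1 * ML ρ (a1 + 1) (-C2 * (t - τ) ^ ρ / C1)) *
          (τ ^ (a1 - 1) / C1 * ML ρ a1 (-C2 * τ ^ ρ / C1)))
      = 1 / C1 ^ 2 *
          ∑' m : ℕ, ∑' k : ℕ,
            (-C2 / C1) ^ (m + k) * t ^ (((m : ℝ) + (k : ℝ)) * ρ + 2 * a1)
              / (Real.Gamma ((m : ℝ) * ρ + a1 + 1) * Real.Gamma ((k : ℝ) * ρ + a1))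
              * Binc ((k : ℝ) * ρ + a1) ((m : ℝ) * ρ + a1 + 1) (s / t) := by
  have ht : 0 < t := lt_of_lt_of_le hs hst
  have ha1' : 0 < a1 + 1 := by linarith
  set F : ℕ × ℕ → ℝ → ℝ := fun p τ =>
    ((t - τ) ^ a1 / C1 * ((-C2 * (t - τ) ^ ρ / C1) ^ p.1
        / Real.Gamma ((p.1 : ℝ) * ρ + (a1 + 1)))) *
      (τ ^ (a1 - 1) / C1 * ((-C2 * τ ^ ρ / C1) ^ p.2 / Real.Gamma ((p.2 : ℝ) * ρ + a1)))
    with hFdef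
  have hΓ1 : ∀ m : ℕ, 0 < Real.Gamma ((m : ℝ) * ρ + (a1 + 1)) := fun m =>
    Real.Gamma_pos_of_pos (by positivity)
  have hΓ2 : ∀ k : ℕ, 0 < Real.Gamma ((k : ℝ) * ρ + a1) := fun k =>
    Real.Gamma_pos_of_pos (by positivity)
  have hΓeq : ∀ m : ℕ, Real.Gamma ((m : ℝ) * ρ + (a1 + 1)) = Real.Gamma ((m : ℝ) * ρ + a1 + 1) :=
    fun m => by rw [add_assoc]
  have hBk : ∀ k : ℕ, (0:ℝ) < (k : ℝ) * ρ + a1 := fun k => by positivity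
  -- closed form of F on Ioc
  have hFeq : ∀ (p : ℕ × ℕ), ∀ τ ∈ Set.Ioc (0:ℝ) s, F p τ =
      (-C2 / C1) ^ (p.1 + p.2)
          / (C1 ^ 2 * Real.Gamma ((p.1 : ℝ) * ρ + a1 + 1) * Real.Gamma ((p.2 : ℝ) * ρ + a1)) *
        ((t - τ) ^ ((p.1 : ℝ) * ρ + a1) * τ ^ ((p.2 : ℝ) * ρ + a1 - 1)) := by
    rintro ⟨m, k⟩ τ ⟨hτ0, hτs⟩
    have hzτ : (0:ℝ) ≤ t - τ := by linarith
    have e1 : (-C2 / C1) ^ m * (t - τ) ^ ((m : ℝ) * ρ + a1)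
        = (-C2 / C1 * (t - τ) ^ ρ) ^ m * (t - τ) ^ a1 :=
      pow_rpow_split' hzτ _ _ _ m (by positivity)
    have e2 : (-C2 / C1) ^ k * τ ^ ((k : ℝ) * ρ + (a1 - 1))
        = (-C2 / C1 * τ ^ ρ) ^ k * τ ^ (a1 - 1) :=
      pow_rpow_split hτ0 _ _ _ k
    simp only [hFdef]
    rw [show -C2 * (t - τ) ^ ρ / C1 = -C2 / C1 * (t - τ) ^ ρ by ring,
        show -C2 * τ ^ ρ / C1 = -C2 / C1 * τ ^ ρ by ring,
        show (k : ℝ) * ρ + a1 - 1 = (k : ℝ) * ρ + (a1 - 1) by ring, ← hΓeq m]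
    calc ((t - τ) ^ a1 / C1 * ((-C2 / C1 * (t - τ) ^ ρ) ^ m
            / Real.Gamma ((m : ℝ) * ρ + (a1 + 1)))) *
          (τ ^ (a1 - 1) / C1 * ((-C2 / C1 * τ ^ ρ) ^ k / Real.Gamma ((k : ℝ) * ρ + a1)))
        = ((-C2 / C1 * (t - τ) ^ ρ) ^ m * (t - τ) ^ a1) * ((-C2 / C1 * τ ^ ρ) ^ k * τ ^ (a1 - 1))
            / (C1 ^ 2 * Real.Gamma ((m : ℝ) * ρ + (a1 + 1)) * Real.Gamma ((k : ℝ) * ρ + a1)) := by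
          ring
      _ = ((-C2 / C1) ^ m * (t - τ) ^ ((m : ℝ) * ρ + a1))
            * ((-C2 / C1) ^ k * τ ^ ((k : ℝ) * ρ + (a1 - 1)))
            / (C1 ^ 2 * Real.Gamma ((m : ℝ) * ρ + (a1 + 1)) * Real.Gamma ((k : ℝ) * ρ + a1)) := by
          rw [← e1, ← e2]
      _ = _ := by rw [pow_add]; ring
  -- series representation of the integrand on Ioc
  have hprod : ∀ τ ∈ Set.Ioc (0:ℝ) s,
      ((t - τ) ^ a1 / C1 * ML ρ (a1 + 1) (-C2 * (t - τ) ^ ρ / C1)) *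
          (τ ^ (a1 - 1) / C1 * ML ρ a1 (-C2 * τ ^ ρ / C1))
        = ∑' p : ℕ × ℕ, F p τ := fun τ _ => ml_prod_rep hρ hρ1 ha1' ha1 _ _ _ _
  -- measurability
  have hFmeas : ∀ p : ℕ × ℕ, AEStronglyMeasurable (F p) (volume.restrict (Set.Ioc 0 s)) := by
    intro p
    apply Measurable.aestronglyMeasurable
    simp only [hFdef]
    fun_prop
  -- integrability of the power bound
  have hrpow_int : ∀ k : ℕ,
      IntegrableOn (fun τ : ℝ => τ ^ ((k : ℝ) * ρ + a1 - 1)) (Set.Ioc 0 s) volume := fun k =>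
    (intervalIntegrable_iff_integrableOn_Ioc_of_le hs.le).1
      (intervalIntegral.intervalIntegrable_rpow' (by nlinarith [hBk k]))
  -- pointwise norm bound
  have hFbd : ∀ (p : ℕ × ℕ), ∀ τ ∈ Set.Ioc (0:ℝ) s, ‖F p τ‖ ≤
      ((C2 / C1) ^ (p.1 + p.2)
          / (C1 ^ 2 * Real.Gamma ((p.1 : ℝ) * ρ + a1 + 1) * Real.Gamma ((p.2 : ℝ) * ρ + a1))
          * t ^ ((p.1 : ℝ) * ρ + a1)) * τ ^ ((p.2 : ℝ) * ρ + a1 - 1) := by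
    rintro ⟨m, k⟩ τ hτ
    obtain ⟨hτ0, hτs⟩ := hτ
    have hzτ : (0:ℝ) ≤ t - τ := by linarith
    have hG1 := hΓ1 m; have hG2 := hΓ2 k
    rw [hΓeq m] at hG1
    rw [hFeq (m, k) τ ⟨hτ0, hτs⟩, norm_mul, Real.norm_eq_abs, Real.norm_eq_abs,
      abs_of_nonneg (by positivity : (0:ℝ) ≤ (t - τ) ^ ((m : ℝ) * ρ + a1) * τ ^ ((k : ℝ) * ρ + a1 - 1)),
      abs_div, abs_pow, abs_div, abs_neg, abs_of_pos hC2, abs_of_pos hC1,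
      abs_of_pos (by positivity : (0:ℝ) < C1 ^ 2 * Real.Gamma ((m : ℝ) * ρ + a1 + 1) * Real.Gamma ((k : ℝ) * ρ + a1))]
    have h1 : (t - τ) ^ ((m : ℝ) * ρ + a1) ≤ t ^ ((m : ℝ) * ρ + a1) :=
      Real.rpow_le_rpow hzτ (by linarith) (by positivity)
    have h2 : (0:ℝ) ≤ τ ^ ((k : ℝ) * ρ + a1 - 1) := Real.rpow_nonneg hτ0.le _
    have h3 : (0:ℝ) ≤ (C2 / C1) ^ (m + k)
        / (C1 ^ 2 * Real.Gamma ((m : ℝ) * ρ + a1 + 1) * Real.Gamma ((k : ℝ) * ρ + a1)) := by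
      positivity
    calc (C2 / C1) ^ (m + k)
          / (C1 ^ 2 * Real.Gamma ((m : ℝ) * ρ + a1 + 1) * Real.Gamma ((k : ℝ) * ρ + a1)) *
          ((t - τ) ^ ((m : ℝ) * ρ + a1) * τ ^ ((k : ℝ) * ρ + a1 - 1))
        ≤ (C2 / C1) ^ (m + k)
          / (C1 ^ 2 * Real.Gamma ((m : ℝ) * ρ + a1 + 1) * Real.Gamma ((k : ℝ) * ρ + a1)) *
          (t ^ ((m : ℝ) * ρ + a1) * τ ^ ((k : ℝ) * ρ + a1 - 1)) := by
          apply mul_le_mul_of_nonneg_left _ h3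
          exact mul_le_mul_of_nonneg_right h1 h2
      _ = _ := by ring
  -- integrability of each F p
  have hFint : ∀ p : ℕ × ℕ, IntegrableOn (F p) (Set.Ioc 0 s) volume := by
    intro p
    apply Integrable.mono' (((hrpow_int p.2).const_mul _)) (hFmeas p)
    filter_upwards [ae_restrict_mem measurableSet_Ioc] with τ hτ
    exact hFbd p τ hτ
  -- value of ∫ τ^(B-1)
  have hval : ∀ k : ℕ, ∫ τ in Set.Ioc (0:ℝ) s, τ ^ ((k : ℝ) * ρ + a1 - 1)
      = s ^ ((k : ℝ) * ρ + a1) / ((k : ℝ) * ρ + a1) := by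
    intro k
    rw [← intervalIntegral.integral_of_le hs.le,
      integral_rpow (Or.inl (by nlinarith [hBk k])),
      show (k : ℝ) * ρ + a1 - 1 + 1 = (k : ℝ) * ρ + a1 by ring,
      Real.zero_rpow (ne_of_gt (hBk k))]
    ring
  -- bound on ∫ ‖F p‖ and summability
  set Hm : ℕ → ℝ := fun m => t ^ a1 / C1 ^ 2
      * ((C2 / C1 * t ^ ρ) ^ m / Real.Gamma ((m : ℝ) * ρ + (a1 + 1))) with hHmdef
  set Hk : ℕ → ℝ := fun k => s ^ a1 / a1
      * ((C2 / C1 * s ^ ρ) ^ k / Real.Gamma ((k : ℝ) * ρ + a1)) with hHkdef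
  have hHm : Summable Hm := (summable_ml hρ hρ1 ha1' _).mul_left _
  have hHk : Summable Hk := (summable_ml hρ hρ1 ha1 _).mul_left _
  have hHm0 : ∀ m, 0 ≤ Hm m := by
    intro m
    have := hΓ1 m
    simp only [hHmdef]
    apply mul_nonneg (by positivity)
    exact div_nonneg (pow_nonneg (by positivity) m) this.le
  have hHk0 : ∀ k, 0 ≤ Hk k := by
    intro k
    have := hΓ2 k
    simp only [hHkdef]
    apply mul_nonneg (by positivity)
    exact div_nonneg (pow_nonneg (by positivity) k) this.le
  have hnormint : ∀ p : ℕ × ℕ, (∫ τ in Set.Ioc (0:ℝ) s, ‖F p τ‖) ≤ Hm p.1 * Hk p.2 := by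
    rintro ⟨m, k⟩
    dsimp only
    have hG1 := hΓ1 m; have hG2 := hΓ2 k
    rw [hΓeq m] at hG1
    have step1 : (∫ τ in Set.Ioc (0:ℝ) s, ‖F (m, k) τ‖) ≤
        ∫ τ in Set.Ioc (0:ℝ) s,
          ((C2 / C1) ^ (m + k)
            / (C1 ^ 2 * Real.Gamma ((m : ℝ) * ρ + a1 + 1) * Real.Gamma ((k : ℝ) * ρ + a1))
            * t ^ ((m : ℝ) * ρ + a1)) * τ ^ ((k : ℝ) * ρ + a1 - 1) := by
      apply setIntegral_mono_on (hFint (m, k)).norm ((hrpow_int k).const_mul _)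
        measurableSet_Ioc
      exact fun τ hτ => hFbd (m, k) τ hτ
    rw [MeasureTheory.integral_const_mul, hval k] at step1
    refine step1.trans ?_
    have e3 : (C2 / C1) ^ m * t ^ ((m : ℝ) * ρ + a1) = (C2 / C1 * t ^ ρ) ^ m * t ^ a1 :=
      pow_rpow_split ht _ _ _ m
    have e4 : (C2 / C1) ^ k * s ^ ((k : ℝ) * ρ + a1) = (C2 / C1 * s ^ ρ) ^ k * s ^ a1 :=
      pow_rpow_split hs _ _ _ k
    have hdiv : s ^ ((k : ℝ) * ρ + a1) / ((k : ℝ) * ρ + a1) ≤ s ^ ((k : ℝ) * ρ + a1) / a1 :=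
      div_le_div_of_nonneg_left (Real.rpow_nonneg hs.le _) ha1 (by nlinarith [hBk k])
    have efin : Hm m * Hk k = (C2 / C1) ^ (m + k)
        / (C1 ^ 2 * Real.Gamma ((m : ℝ) * ρ + a1 + 1) * Real.Gamma ((k : ℝ) * ρ + a1))
        * t ^ ((m : ℝ) * ρ + a1) * (s ^ ((k : ℝ) * ρ + a1) / a1) := by
      simp only [hHmdef, hHkdef]
      rw [hΓeq m]
      calc t ^ a1 / C1 ^ 2 * ((C2 / C1 * t ^ ρ) ^ m / Real.Gamma ((m : ℝ) * ρ + a1 + 1)) *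
            (s ^ a1 / a1 * ((C2 / C1 * s ^ ρ) ^ k / Real.Gamma ((k : ℝ) * ρ + a1)))
          = ((C2 / C1 * t ^ ρ) ^ m * t ^ a1) * ((C2 / C1 * s ^ ρ) ^ k * s ^ a1)
              / (C1 ^ 2 * Real.Gamma ((m : ℝ) * ρ + a1 + 1) * Real.Gamma ((k : ℝ) * ρ + a1) * a1) := by
            ring
        _ = ((C2 / C1) ^ m * t ^ ((m : ℝ) * ρ + a1)) * ((C2 / C1) ^ k * s ^ ((k : ℝ) * ρ + a1))
              / (C1 ^ 2 * Real.Gamma ((m : ℝ) * ρ + a1 + 1) * Real.Gamma ((k : ℝ) * ρ + a1) * a1) := by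
            rw [← e3, ← e4]
        _ = _ := by rw [pow_add]; ring
    calc (C2 / C1) ^ (m + k)
          / (C1 ^ 2 * Real.Gamma ((m : ℝ) * ρ + a1 + 1) * Real.Gamma ((k : ℝ) * ρ + a1))
          * t ^ ((m : ℝ) * ρ + a1) * (s ^ ((k : ℝ) * ρ + a1) / ((k : ℝ) * ρ + a1))
        ≤ (C2 / C1) ^ (m + k)
          / (C1 ^ 2 * Real.Gamma ((m : ℝ) * ρ + a1 + 1) * Real.Gamma ((k : ℝ) * ρ + a1))
          * t ^ ((m : ℝ) * ρ + a1) * (s ^ ((k : ℝ) * ρ + a1) / a1) := by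
          apply mul_le_mul_of_nonneg_left hdiv
          positivity
      _ = Hm m * Hk k := efin.symm
    
  have hFnormsum : Summable fun p : ℕ × ℕ => ∫ τ in Set.Ioc (0:ℝ) s, ‖F p τ‖ :=
    Summable.of_nonneg_of_le (fun p => integral_nonneg fun τ => norm_nonneg _) hnormint
      (hHm.mul_of_nonneg hHk hHm0 hHk0)
  -- per-term integral value
  have hIval : ∀ p : ℕ × ℕ, (∫ τ in Set.Ioc (0:ℝ) s, F p τ)
      = 1 / C1 ^ 2 *
          ((-C2 / C1) ^ (p.1 + p.2) * t ^ (((p.1 : ℝ) + (p.2 : ℝ)) * ρ + 2 * a1)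
            / (Real.Gamma ((p.1 : ℝ) * ρ + a1 + 1) * Real.Gamma ((p.2 : ℝ) * ρ + a1))
            * Binc ((p.2 : ℝ) * ρ + a1) ((p.1 : ℝ) * ρ + a1 + 1) (s / t)) := by
    rintro ⟨m, k⟩
    dsimp only
    have hG1 := hΓ1 m; have hG2 := hΓ2 k
    rw [hΓeq m] at hG1
    rw [MeasureTheory.setIntegral_congr_fun measurableSet_Ioc
        (fun τ hτ => hFeq (m, k) τ hτ),
      MeasureTheory.integral_const_mul, ← intervalIntegral.integral_of_le hs.le,
      core_integral hs hst (by positivity) (hBk k),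
      show ((m : ℝ) * ρ + a1) + ((k : ℝ) * ρ + a1) = ((m : ℝ) + (k : ℝ)) * ρ + 2 * a1 by ring]
    field_simp
  -- assemble
  have hTsum : Summable fun p : ℕ × ℕ => ∫ τ in Set.Ioc (0:ℝ) s, F p τ :=
    Summable.of_norm_bounded hFnormsum fun p => norm_integral_le_integral_norm _
  rw [intervalIntegral.integral_of_le hs.le,
    MeasureTheory.setIntegral_congr_fun measurableSet_Ioc (fun τ hτ => hprod τ hτ),
    ← MeasureTheory.integral_tsum_of_summable_integral_norm (fun p => hFint p) hFnormsum,
    hTsum.tsum_prod' hTsum.prod_factor, ← tsum_mul_left]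
  exact tsum_congr fun m => by
    rw [← tsum_mul_left]
    exact tsum_congr fun k => hIval (m, k)

/-- For `0 < s ≤ t`, the integral `I(s,t)` equals the stated double series involving the
incomplete Beta function. -/
theorem stmt_2 (a1 a2 C1 C2 : ℝ) (ha2 : 0 < a2) (ha12 : a2 < a1) (ha1 : a1 < 1)
    (hC1 : 0 < C1) (hC2 : 0 < C2) (hC : C1 + C2 = 1) (s t : ℝ) (hs : 0 < s) (hst : s ≤ t) :
    Ifun a1 a2 C1 C2 s t
      = 1 / C1 ^ 2 *
          ∑' m : ℕ, ∑' k : ℕ,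
            (-C2 / C1) ^ (m + k) * t ^ (((m : ℝ) + (k : ℝ)) * (a1 - a2) + 2 * a1)
              / (Real.Gamma ((m : ℝ) * (a1 - a2) + a1 + 1)
                  * Real.Gamma ((k : ℝ) * (a1 - a2) + a1))
              * Binc ((k : ℝ) * (a1 - a2) + a1) ((m : ℝ) * (a1 - a2) + a1 + 1) (s / t) := by
  have hρ : 0 < a1 - a2 := by linarith
  have hρ1 : a1 - a2 ≤ 1 := by linarith
  have h := main_aux (a1 - a2) a1 C1 C2 s t hρ hρ1 (by linarith) hC1 hC2 hs hst
  simpa only [Ifun, Ufun, ufun] using h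
end
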